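/- There exists no finite set S of substitutions on {a,b} such that the set of Sturmian words equals the stable set of S. -/

import Mathlib

universe u
variable {A : Type u}

/-- Apply a substitution (given by images of letters) to a finite word. -/
def applyList (f : A → List A) (u : List A) : List A := u.flatMap f

/-- Starting position of the image of the `n`-th letter of `v` inside `f(v)`. -/
def blockStart (f : A → List A) (v : ℕ → A) : ℕ → ℕ
  | 0 => 0
  | n + 1 => blockStart f v n + (f (v n)).length

/-- `ApplyEq f v u` means `u = f(v)` for right-infinite words. -/
def ApplyEq (f : A → List A) (v u : ℕ → A) : Prop :=
  ∀ (n i : ℕ) (h : i < (f (v n)).length),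
    u (blockStart f v n + i) = (f (v n))[i]

/-- `u` occurs as a factor of `w` at position `k`. -/
def FactorAt (w : ℕ → A) (u : List A) (k : ℕ) : Prop :=
  ∀ (i : ℕ) (h : i < u.length), u[i] = w (k + i)

def Factor (w : ℕ → A) (u : List A) : Prop := ∃ k, FactorAt w u k

/-- `u` is a prefix of the infinite word `w`. -/
def PrefixOf (u : List A) (w : ℕ → A) : Prop :=
  ∀ (i : ℕ) (h : i < u.length), u[i] = w i

/-- Membership in the stable set of a set `S` of substitutions. -/
def InStable (S : Set (A → List A)) (w : ℕ → A) : Prop :=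
  ∃ (σ : ℕ → A → List A) (ws : ℕ → ℕ → A),
    (∀ n, σ n ∈ S) ∧ ws 0 = w ∧ ∀ n, ApplyEq (σ n) (ws (n + 1)) (ws n)

/-- Composition `σ_1 ∘ ⋯ ∘ σ_n` of the first `n` substitutions of `s` (0-indexed). -/
def compSeq (s : ℕ → A → List A) : ℕ → A → List A
  | 0 => fun a => [a]
  | n + 1 => fun a => applyList (compSeq s n) (s n a)

/-- `w` is S-adic with directive sequence `σ`. -/
def SAdicWith (σ : ℕ → A → List A) (w : ℕ → A) : Prop :=
  ∃ a : ℕ → A, (∀ n, PrefixOf (compSeq σ n (a n)) w) ∧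
    ∀ N : ℕ, ∃ n, N ≤ (compSeq σ n (a n)).length



-- Binary alphabet: letter `a` is `false`, letter `b` is `true`.
def La : Bool → List Bool | false => [false] | true => [false, true]
def Lb : Bool → List Bool | false => [true, false] | true => [true]
def Ra : Bool → List Bool | false => [false] | true => [true, false]
def Rb : Bool → List Bool | false => [false, true] | true => [true]

/-- An infinite word is balanced. -/
def IsBalanced (w : ℕ → Bool) : Prop :=
  ∀ (c : Bool) (u v : List Bool), Factor w u → Factor w v → u.length = v.length →
    |(u.count c : ℤ) - (v.count c : ℤ)| ≤ 1

/-- `w` is ultimately periodic. -/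
def UltPeriodic (w : ℕ → Bool) : Prop :=
  ∃ p N : ℕ, 0 < p ∧ ∀ n, N ≤ n → w (n + p) = w n

/-- Sturmian = aperiodic balanced binary infinite word. -/
def Sturmian (w : ℕ → Bool) : Prop := IsBalanced w ∧ ¬ UltPeriodic w


section AuxRot

noncomputable def rotWord (α : ℝ) : ℕ → Bool :=
  fun n => decide (⌊(n:ℝ) * α⌋ < ⌊((n:ℝ) + 1) * α⌋)

lemma floor_step (α : ℝ) (h0 : 0 ≤ α) (h1 : α < 1) (x : ℝ) :
    ⌊(x + 1) * α⌋ = ⌊x * α⌋ ∨ ⌊(x + 1) * α⌋ = ⌊x * α⌋ + 1 := by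
  have hle : ⌊x * α⌋ ≤ ⌊(x + 1) * α⌋ := Int.floor_le_floor (by nlinarith)
  have hlt : ⌊(x + 1) * α⌋ ≤ ⌊x * α⌋ + 1 := by
    have : ⌊x * α + 1⌋ = ⌊x * α⌋ + 1 := by
      exact_mod_cast Int.floor_add_one (x * α)
    rw [← this]
    exact Int.floor_le_floor (by nlinarith)
  omega

lemma factorAt_cons {w : ℕ → Bool} {x : Bool} {u : List Bool} {p : ℕ}
    (h : ∀ (i : ℕ) (h : i < (x :: u).length), (x :: u)[i] = w (p + i)) :
    x = w p ∧ ∀ (i : ℕ) (h : i < u.length), u[i] = w ((p + 1) + i) := by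
  constructor
  · exact h 0 (by simp)
  · intro i hi
    have := h (i + 1) (by simpa using Nat.succ_lt_succ hi)
    simpa [Nat.add_comm, Nat.add_assoc, Nat.add_left_comm] using this

lemma count_true_factor (α : ℝ) (h0 : 0 ≤ α) (h1 : α < 1) :
    ∀ (u : List Bool) (p : ℕ),
      (∀ (i : ℕ) (h : i < u.length), u[i] = rotWord α (p + i)) →
      (u.count true : ℤ) = ⌊((p : ℝ) + u.length) * α⌋ - ⌊(p : ℝ) * α⌋ := by
  intro u
  induction u with
  | nil => intro p _; simp
  | cons x u ih =>
    intro p h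
    obtain ⟨hx, hu⟩ := factorAt_cons h
    have hrec := ih (p + 1) hu
    have hstep := floor_step α h0 h1 (p : ℝ)
    rw [List.count_cons]
    push_cast at hrec ⊢
    have harg : ((p : ℝ) + 1 + (u.length : ℝ)) = ((p : ℝ) + ((u.length : ℝ) + 1)) := by ring
    rw [harg] at hrec
    by_cases hb : x = true
    · subst hb
      have hlt : ⌊(p : ℝ) * α⌋ < ⌊((p:ℝ) + 1) * α⌋ := by
        simpa [rotWord] using hx.symm
      simp only [List.length_cons]
      push_cast
      norm_num
      omega
    · have hx' : x = false := by simpa using hb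
      subst hx'
      have hlt : ¬ ⌊(p : ℝ) * α⌋ < ⌊((p:ℝ) + 1) * α⌋ := by
        simpa [rotWord] using hx.symm
      simp only [List.length_cons]
      push_cast
      norm_num
      omega

lemma count_bool_add (u : List Bool) : u.count false + u.count true = u.length := by
  induction u with
  | nil => simp
  | cons x u ih =>
    cases x <;> simp [List.count_cons] <;> omega

lemma rot_balanced (α : ℝ) (h0 : 0 ≤ α) (h1 : α < 1) : IsBalanced (rotWord α) := by
  intro c u v hu hv hlen
  obtain ⟨p, hp⟩ := hu
  obtain ⟨q, hq⟩ := hv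
  have hcu := count_true_factor α h0 h1 u p hp
  have hcv := count_true_factor α h0 h1 v q hq
  rw [hlen] at hcu
  set L : ℕ := v.length with hL
  have key : |(u.count true : ℤ) - (v.count true : ℤ)| ≤ 1 := by
    have bnd : ∀ r : ℕ, ((L : ℝ) * α - 1 < (( ⌊((r : ℝ) + L) * α⌋ - ⌊(r : ℝ) * α⌋ : ℤ) : ℝ))
        ∧ ((( ⌊((r : ℝ) + L) * α⌋ - ⌊(r : ℝ) * α⌋ : ℤ) : ℝ) < (L : ℝ) * α + 1) := by
      intro r
      have f1 := Int.floor_le (((r : ℝ) + L) * α)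
      have f2 := Int.sub_one_lt_floor (((r : ℝ) + L) * α)
      have f3 := Int.floor_le ((r : ℝ) * α)
      have f4 := Int.sub_one_lt_floor ((r : ℝ) * α)
      constructor <;> · push_cast; nlinarith
    obtain ⟨b1, b2⟩ := bnd p
    obtain ⟨b3, b4⟩ := bnd q
    have habs : |(((u.count true : ℤ) - (v.count true : ℤ) : ℤ) : ℝ)| < 2 := by
      rw [hcu, hcv, abs_lt]
      constructor <;> · push_cast at b1 b2 b3 b4 ⊢; linarith
    have : |(u.count true : ℤ) - (v.count true : ℤ)| < 2 := by
      exact_mod_cast (by rwa [← Int.cast_abs] at habs : ((|(u.count true : ℤ) - (v.count true : ℤ)| : ℤ) : ℝ) < 2)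
    omega
  cases c with
  | true => exact key
  | false =>
    have e1 := count_bool_add u
    have e2 := count_bool_add v
    rw [hlen] at e1
    rw [abs_le] at key ⊢
    omega

lemma rot_aperiodic (α : ℝ) (h0 : 0 ≤ α) (h1 : α < 1) (hirr : Irrational α) :
    ¬ UltPeriodic (rotWord α) := by
  rintro ⟨p, N, hp, hper⟩
  set F : ℕ → ℤ := fun n => ⌊(n : ℝ) * α⌋ with hF
  have hstep : ∀ n : ℕ, F (n + 1) = F n ∨ F (n + 1) = F n + 1 := by
    intro n
    have := floor_step α h0 h1 (n : ℝ)
    simp only [hF]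
    push_cast
    exact this
  have hdec : ∀ n : ℕ, rotWord α n = decide (F n < F (n + 1)) := by
    intro n
    simp only [rotWord, hF]
    norm_num
  -- differences are constant from N on
  have hconst : ∀ n : ℕ, N ≤ n → F (n + p) - F n = F (N + p) - F N := by
    intro n hn
    induction n with
    | zero =>
      have : N = 0 := Nat.le_zero.mp hn
      simp [this]
    | succ m ih =>
      rcases Nat.lt_or_ge m N with hm | hm
      · have : N = m + 1 := by omega
        simp [this]
      · have hper' := hper m hm
        rw [hdec, hdec] at hper'
        have hiff : (F (m + p) < F (m + p + 1)) ↔ (F m < F (m + 1)) := by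
          constructor <;> intro hh <;>
            [skip; skip] <;>
            · by_contra hc
              simp only [decide_eq_decide] at hper'
              tauto
        have s1 := hstep m
        have s2 := hstep (m + p)
        have := ih hm
        have harr : m + 1 + p = m + p + 1 := by omega
        rw [harr]
        omega
  set G : ℤ := F (N + p) - F N with hG
  have htel : ∀ j : ℕ, F (N + j * p) = F N + j * G := by
    intro j
    induction j with
    | zero => simp
    | succ i ih =>
      have hc := hconst (N + i * p) (by omega)
      have harr : N + (i + 1) * p = N + i * p + p := by ring
      rw [harr]
      have hval : F (N + i * p + p) = F (N + i * p) + G := by omega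
      rw [hval, ih]
      push_cast
      ring
  -- floor bounds
  have hbound : ∀ j : ℕ, ((F N : ℝ) + j * G ≤ ((N : ℝ) + j * p) * α)
      ∧ (((N : ℝ) + j * p) * α - 1 < (F N : ℝ) + j * G) := by
    intro j
    have h1 := Int.floor_le (((N + j * p : ℕ) : ℝ) * α)
    have h2 := Int.sub_one_lt_floor (((N + j * p : ℕ) : ℝ) * α)
    have h3 := htel j
    rw [show F (N + j * p) = ⌊((N + j * p : ℕ) : ℝ) * α⌋ from rfl] at h3
    rw [h3] at h1 h2
    push_cast at h1 h2 ⊢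
    constructor <;> linarith
  set β : ℝ := (p : ℝ) * α - (G : ℝ) with hβ
  have hβne : β ≠ 0 := by
    intro hc
    have : (p : ℝ) * α = (G : ℝ) := by linarith [hc]
    have hpirr : Irrational ((p : ℝ) * α) := by
      have := hirr.natCast_mul (m := p) (by omega)
      simpa [mul_comm] using this
    exact hpirr ⟨(G : ℚ), by push_cast; exact this.symm⟩
  have hjb : ∀ j : ℕ, ((F N : ℝ) - (N : ℝ) * α ≤ (j : ℝ) * β)
      ∧ ((j : ℝ) * β < (F N : ℝ) - (N : ℝ) * α + 1) := by
    intro j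
    obtain ⟨c1, c2⟩ := hbound j
    constructor <;> · simp only [hβ]; nlinarith
  rcases lt_or_gt_of_ne hβne with hneg | hpos
  · obtain ⟨j, hj⟩ := exists_nat_gt ((((F N : ℝ) - (N : ℝ) * α) - ((F N : ℝ) - (N : ℝ) * α + 0)) / (-β) + ((1 - ((F N : ℝ) - (N : ℝ) * α)) ) / (-β))
    -- simpler: choose j with j * (-β) large
    obtain ⟨m, hm⟩ := exists_nat_gt ((-((F N : ℝ) - (N : ℝ) * α)) / (-β))
    have hmβ : (m : ℝ) * β < (F N : ℝ) - (N : ℝ) * α := by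
      have hnb : (0 : ℝ) < -β := by linarith
      have := (div_lt_iff₀ hnb).mp hm
      nlinarith
    exact absurd (hjb m).1 (by linarith)
  · obtain ⟨m, hm⟩ := exists_nat_gt ((((F N : ℝ) - (N : ℝ) * α) + 1) / β)
    have hmβ : ((F N : ℝ) - (N : ℝ) * α) + 1 < (m : ℝ) * β := by
      have := (div_lt_iff₀ hpos).mp hm
      nlinarith
    exact absurd (hjb m).2 (by linarith)

end AuxRot


section AuxMain

open Filter

lemma sturmian_false_prefix (k : ℕ) :
    ∃ w : ℕ → Bool, Sturmian w ∧ ∀ m, m < k → w m = false := by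
  set α : ℝ := Real.sqrt 2 / ((2 ^ (k + 2) : ℕ) : ℝ) with hα
  have hs2pos : (0 : ℝ) < Real.sqrt 2 := Real.sqrt_pos.mpr (by norm_num)
  have hs2sq : Real.sqrt 2 ^ 2 = 2 := Real.sq_sqrt (by norm_num)
  have hs2lt : Real.sqrt 2 < 2 := by nlinarith
  have hden : (0 : ℝ) < ((2 ^ (k + 2) : ℕ) : ℝ) := by positivity
  have hkpow : (k : ℝ) + 1 ≤ ((2 ^ (k + 1) : ℕ) : ℝ) := by
    have h1 := Nat.lt_two_pow_self (n := k)
    have h2 : 2 ^ k ≤ 2 ^ (k + 1) := Nat.pow_le_pow_right (by norm_num) (by omega)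
    exact_mod_cast (by omega : k + 1 ≤ 2 ^ (k + 1))
  have hpow2 : ((2 ^ (k + 2) : ℕ) : ℝ) = 2 * ((2 ^ (k + 1) : ℕ) : ℝ) := by
    push_cast; ring
  have h0 : 0 ≤ α := le_of_lt (div_pos hs2pos hden)
  have h1 : α < 1 := by
    rw [hα, div_lt_one hden]
    have h4 : (4 : ℝ) ≤ ((2 ^ (k + 2) : ℕ) : ℝ) := by
      have : (2 ^ 2 : ℕ) ≤ 2 ^ (k + 2) := Nat.pow_le_pow_right (by norm_num) (by omega)
      exact_mod_cast this
    linarith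
  have hirr : Irrational α := irrational_sqrt_two.div_natCast (by positivity)
  refine ⟨rotWord α, ⟨rot_balanced α h0 h1, rot_aperiodic α h0 h1 hirr⟩, ?_⟩
  intro m hm
  have hmain : ((m : ℝ) + 1) * α < 1 := by
    rw [hα, mul_div_assoc']
    rw [div_lt_one hden, hpow2]
    have hmk : (m : ℝ) + 1 ≤ (k : ℝ) := by exact_mod_cast hm
    have hk1 : (1 : ℝ) ≤ (k : ℝ) := by exact_mod_cast (by omega : 1 ≤ k)
    nlinarith
  have hfl : ∀ x : ℝ, 0 ≤ x → x * α < 1 → ⌊x * α⌋ = 0 := by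
    intro x hx hxa
    apply Int.floor_eq_zero_iff.mpr
    constructor
    · positivity
    · exact hxa
  have hm0 : ⌊(m : ℝ) * α⌋ = 0 := by
    apply hfl _ (Nat.cast_nonneg m)
    nlinarith
  have hm1 : ⌊((m : ℝ) + 1) * α⌋ = 0 := hfl _ (by positivity) hmain
  simp [rotWord, hm0, hm1]

lemma blockStart_congr {f : Bool → List Bool} {v v' : ℕ → Bool} :
    ∀ n : ℕ, (∀ j, j < n → v j = v' j) → blockStart f v n = blockStart f v' n := by
  intro n
  induction n with
  | zero => intro _; rfl
  | succ m ih =>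
    intro h
    simp only [blockStart]
    rw [ih (fun j hj => h j (by omega)), h m (by omega)]

lemma ultra_exists_bool (U : Ultrafilter ℕ) (g : ℕ → Bool) : ∃ b, {k | g k = b} ∈ U := by
  by_cases h : {k | g k = true} ∈ U
  · exact ⟨true, h⟩
  · refine ⟨false, ?_⟩
    have hc := (Ultrafilter.compl_mem_iff_notMem (f := U)).mpr h
    have : {k | g k = true}ᶜ = {k | g k = false} := by
      ext k
      simp only [Set.mem_compl_iff, Set.mem_setOf_eq, Bool.not_eq_true]
    rwa [this] at hc

lemma ultra_exists_mem {β : Type*} (U : Ultrafilter ℕ) (S : Set β) (hS : S.Finite)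
    (g : ℕ → β) (hg : ∀ k, g k ∈ S) : ∃ f ∈ S, {k | g k = f} ∈ U := by
  by_contra h
  push_neg at h
  have hc : ∀ f ∈ S, {k | g k = f}ᶜ ∈ U := by
    intro f hf
    exact (Ultrafilter.compl_mem_iff_notMem (f := U)).mpr (h f hf)
  have hint : (⋂ f ∈ S, {k | g k = f}ᶜ) ∈ U := (Filter.biInter_mem hS).mpr hc
  obtain ⟨k, hk⟩ := Ultrafilter.nonempty_of_mem hint
  simp only [Set.mem_iInter, Set.mem_compl_iff, Set.mem_setOf_eq] at hk
  exact hk (g k) (hg k) rfl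

lemma stable_limit (S : Set (Bool → List Bool)) (hS : S.Finite)
    (W : ℕ → ℕ → Bool) (hW : ∀ k, InStable S (W k)) (w : ℕ → Bool)
    (hconv : ∀ m k, m < k → W k m = w m) : InStable S w := by
  choose Sg WS hmem h0 happ using hW
  set U : Ultrafilter ℕ := Filter.hyperfilter ℕ with hU
  have hσ : ∀ n, ∃ f ∈ S, {k | Sg k n = f} ∈ U :=
    fun n => ultra_exists_mem U S hS (fun k => Sg k n) (fun k => hmem k n)
  choose σ hσS hσU using hσ
  have hbσ : ∀ n m, ∃ b, {k | WS k n m = b} ∈ U :=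
    fun n m => ultra_exists_bool U (fun k => WS k n m)
  choose ws hws using hbσ
  refine ⟨σ, ws, hσS, ?_, ?_⟩
  · funext m
    have h1 : {k | WS k 0 m = ws 0 m} ∈ U := hws 0 m
    have h2 : {k | m < k} ∈ U := by
      apply Filter.mem_hyperfilter_of_finite_compl
      have : {k : ℕ | m < k}ᶜ ⊆ Set.Iic m := by
        intro x hx
        simp only [Set.mem_compl_iff, Set.mem_setOf_eq, not_lt] at hx
        exact hx
      exact (Set.finite_Iic m).subset this
    obtain ⟨k, hk1, hk2⟩ := Ultrafilter.nonempty_of_mem (Filter.inter_mem h1 h2)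
    have := hconv m k hk2
    rw [← this, ← congrFun (h0 k) m]
    exact hk1.symm
  · intro n
    intro j i hi
    -- relevant U-sets
    have hA : {k | Sg k n = σ n} ∈ U := hσU n
    have hB : (⋂ m ∈ Finset.range (j + 1), {k | WS k (n + 1) m = ws (n + 1) m}) ∈ U :=
      Filter.biInter_finset_mem _ |>.mpr (fun m _ => hws (n + 1) m)
    have hC : {k | WS k n (blockStart (σ n) (ws (n + 1)) j + i)
        = ws n (blockStart (σ n) (ws (n + 1)) j + i)} ∈ U :=
      hws n (blockStart (σ n) (ws (n + 1)) j + i)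
    obtain ⟨k, hk⟩ := Ultrafilter.nonempty_of_mem
      (Filter.inter_mem hA (Filter.inter_mem hB hC))
    obtain ⟨hkA, hkB, hkC⟩ := hk
    simp only [Set.mem_iInter, Set.mem_setOf_eq, Finset.mem_range] at hkA hkB hkC
    have hvj : WS k (n + 1) j = ws (n + 1) j := hkB j (by omega)
    have hbs : blockStart (Sg k n) (WS k (n + 1)) j = blockStart (σ n) (ws (n + 1)) j := by
      rw [hkA]
      exact blockStart_congr j (fun m hm => hkB m (by omega))
    have hword : Sg k n (WS k (n + 1) j) = σ n (ws (n + 1) j) := by rw [hkA, hvj]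
    have hi' : i < (Sg k n (WS k (n + 1) j)).length := by rw [hword]; exact hi
    have happk := happ k n j i hi'
    rw [hbs] at happk
    rw [hkC] at happk
    rw [happk]
    congr 1

end AuxMain

/-- no finite set of substitutions has the set of Sturmian words as
its stable set. -/
theorem stmt14 :
    ¬ ∃ S : Set (Bool → List Bool), S.Finite ∧ (∀ f ∈ S, ∀ a, f a ≠ []) ∧
      ∀ w : ℕ → Bool, InStable S w ↔ Sturmian w := by
  rintro ⟨S, hfin, -, hiff⟩
  have hW : ∀ k : ℕ, ∃ w : ℕ → Bool, Sturmian w ∧ ∀ m, m < k → w m = false :=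
    sturmian_false_prefix
  choose W hWst hWpre using hW
  have hstab : ∀ k, InStable S (W k) := fun k => (hiff _).mpr (hWst k)
  have hlim : InStable S (fun _ => false) :=
    stable_limit S hfin W hstab _ (fun m k hm => hWpre k m hm)
  have hst := (hiff _).mp hlim
  exact hst.2 ⟨1, 0, one_pos, fun n _ => rfl⟩
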